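/- Every finite 2-connected chordal graph is locally connected; that is, if G is a finite connected graph on at least 3 vertices such that deleting any single vertex leaves a connected graph, and G contains no induced cycle of length at least 4, then for every vertex v the subgraph induced on N(v) is connected. -/

import Mathlib

open SimpleGraph

/-- The line defined by two vertices `a` and `b` of a graph: `{a, b}` together with all
vertices `c` lying on a shortest path through `a`, `b` and `c` (in some order). -/
def SimpleGraph.line {V : Type*} (G : SimpleGraph V) (a b : V) : Set V :=
  {a, b} ∪ {c | G.dist a b = G.dist a c + G.dist c b ∨
                G.dist a c = G.dist a b + G.dist b c ∨
                G.dist b c = G.dist b a + G.dist a c}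

/-- The set of all lines of a graph. -/
def SimpleGraph.lineSet {V : Type*} (G : SimpleGraph V) : Set (Set V) :=
  {s | ∃ a b : V, a ≠ b ∧ s = G.line a b}

/-- A graph is locally connected if the subgraph induced on each neighborhood is connected. -/
def SimpleGraph.LocallyConnected {V : Type*} (G : SimpleGraph V) : Prop :=
  ∀ v : V, (G.induce (G.neighborSet v)).Connected

section Aux
open Walk
variable {V : Type*} {G : SimpleGraph V}

lemma getVert_mem_support' {u v : V} (p : G.Walk u v) (i : ℕ) :
    p.getVert i ∈ p.support := by
  induction p generalizing i with
  | nil => simp [Walk.getVert]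
  | cons h q ih =>
    cases i with
    | zero => simp [Walk.getVert]
    | succ n => simp only [Walk.getVert, Walk.support_cons, List.mem_cons]; exact Or.inr (ih n)

lemma IsPath.getVert_injOn' {u v : V} {p : G.Walk u v} (hp : p.IsPath) :
    ∀ i ≤ p.length, ∀ j ≤ p.length, p.getVert i = p.getVert j → i = j := by
  induction p with
  | nil => intro i hi j hj _; simp only [Walk.length_nil, Nat.le_zero] at hi hj; omega
  | cons h q ih =>
    rw [Walk.cons_isPath_iff] at hp
    intro i hi j hj hij
    cases i with
    | zero =>
      cases j with
      | zero => rfl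
      | succ m =>
        exfalso
        simp only [Walk.getVert] at hij
        exact hp.2 (hij ▸ getVert_mem_support' q m)
    | succ n =>
      cases j with
      | zero =>
        exfalso
        simp only [Walk.getVert] at hij
        exact hp.2 (hij ▸ getVert_mem_support' q n)
      | succ m =>
        simp only [Walk.getVert] at hij
        simp only [Walk.length_cons] at hi hj
        have := ih hp.1 n (by omega) m (by omega) hij
        omega

lemma length_drop' {u v : V} (p : G.Walk u v) (n : ℕ) :
    (p.drop n).length = p.length - n := by
  induction p generalizing n with
  | nil => simp [Walk.drop]
  | cons h q ih =>
    cases n with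
    | zero => simp [Walk.drop]
    | succ m => simpa [Walk.drop] using ih m

lemma support_drop_subset' {u v : V} (p : G.Walk u v) (n : ℕ) :
    (p.drop n).support ⊆ p.support := by
  induction p generalizing n with
  | nil => cases n <;> simp [Walk.drop, Walk.getVert]
  | cons h q ih =>
    cases n with
    | zero => simp [Walk.drop]
    | succ m =>
      simp only [Walk.drop, Walk.support_copy, Walk.support_cons]
      exact fun x hx => List.mem_cons_of_mem _ (ih m hx)

def myTake {u v : V} (p : G.Walk u v) (i : ℕ) (hi : i ≤ p.length) : G.Walk u (p.getVert i) :=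
  ((p.reverse.drop (p.length - i)).reverse).copy rfl
    (by rw [Walk.getVert_reverse]; congr 1; omega)

lemma length_myTake {u v : V} (p : G.Walk u v) (i : ℕ) (hi : i ≤ p.length) :
    (myTake p i hi).length = i := by
  simp [myTake, length_drop', Walk.length_reverse]
  omega

lemma support_myTake_subset {u v : V} (p : G.Walk u v) (i : ℕ) (hi : i ≤ p.length) :
    (myTake p i hi).support ⊆ p.support := by
  intro x hx
  simp only [myTake, Walk.support_copy, Walk.support_reverse, List.mem_reverse] at hx
  have := support_drop_subset' p.reverse _ hx
  rwa [Walk.support_reverse, List.mem_reverse] at this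

lemma cyc_adj_char {n : ℕ} (u w : Fin (n+2)) (h : u.val < w.val) :
    (cycleGraph (n+2)).Adj u w ↔ (w.val = u.val + 1 ∨ (u.val = 0 ∧ w.val = n+1)) := by
  have hu := u.isLt
  have hw := w.isLt
  rw [SimpleGraph.cycleGraph_adj]
  rw [Fin.ext_iff, Fin.ext_iff, Fin.sub_def, Fin.sub_def]
  have h1 : ((n+2) - w.val + u.val) % (n+2) = (n+2) - w.val + u.val := by
    rw [Nat.mod_eq_of_lt (by omega)]
  have h2 : ((n+2) - u.val + w.val) % (n+2) = w.val - u.val := by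
    rw [Nat.mod_eq_sub_mod (by omega), Nat.mod_eq_of_lt (by omega)]; omega
  simp only [Fin.val_mk, h1, h2, Fin.val_one]
  omega


lemma key (G : SimpleGraph V) (v : V)
    (hchordal : ∀ n : ℕ, 4 ≤ n → IsEmpty (cycleGraph n ↪g G)) :
    ∀ (n : ℕ) (a b : V) (ha : G.Adj v a) (hb : G.Adj v b) (p : G.Walk a b),
      v ∉ p.support → p.length ≤ n →
      (G.induce (G.neighborSet v)).Reachable ⟨a, ha⟩ ⟨b, hb⟩ := by
  classical
  intro n
  induction n using Nat.strong_induction_on with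
  | _ n IH =>
  intro a b ha hb p hp hplen
  have hex : {m | ∃ q : G.Walk a b, v ∉ q.support ∧ q.length = m}.Nonempty :=
    ⟨p.length, p, hp, rfl⟩
  obtain ⟨m, ⟨q, hq, hqm⟩, hmin'⟩ :
      ∃ m, (∃ q : G.Walk a b, v ∉ q.support ∧ q.length = m) ∧
        ∀ m', (∃ q : G.Walk a b, v ∉ q.support ∧ q.length = m') → m ≤ m' :=
    ⟨sInf _, Nat.sInf_mem hex, fun _ h => Nat.sInf_le h⟩
  have hmin : ∀ (q' : G.Walk a b), v ∉ q'.support → m ≤ q'.length :=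
    fun q' h => hmin' _ ⟨q', h, rfl⟩
  have hmn : m ≤ n := le_trans (hmin p hp) hplen
  have hr : q.bypass.IsPath := q.bypass_isPath
  set r := q.bypass with hrdef
  have hrs : v ∉ r.support := fun h => hq (q.support_bypass_subset h)
  have hrlen : r.length = m :=
    le_antisymm (hqm ▸ q.length_bypass_le) (hmin r hrs)
  clear hqm hq hrdef
  rcases m with _ | _ | k
  · have hab : a = b := Walk.eq_of_length_eq_zero hrlen
    subst hab
    exact Reachable.refl _
  · have h01 := r.adj_getVert_succ (i := 0) (by omega)
    rw [r.getVert_zero, show r.getVert 1 = b by rw [show (1:ℕ) = r.length by omega]; exact r.getVert_length] at h01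
    exact SimpleGraph.Adj.reachable (by simp [comap_adj, h01])
  · by_cases hint : ∃ i, 0 < i ∧ i < k + 2 ∧ G.Adj v (r.getVert i)
    · obtain ⟨i, hi0, him, hvc⟩ := hint
      have hile : i ≤ r.length := by omega
      have h1 := IH (n-1) (by omega) a (r.getVert i) ha hvc (myTake r i hile)
        (fun h => hrs (support_myTake_subset r i hile h))
        (by rw [length_myTake]; omega)
      have h2 := IH (n-1) (by omega) (r.getVert i) b hvc hb (r.drop i)
        (fun h => hrs (support_drop_subset' r i h))
        (by rw [length_drop']; omega)
      exact h1.trans h2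
    · push_neg at hint
      exfalso
      have hchord : ∀ i j : ℕ, i + 1 < j → j ≤ k + 2 → ¬ G.Adj (r.getVert i) (r.getVert j) := by
        intro i j hij hj hadj
        have hile : i ≤ r.length := by omega
        set s : G.Walk a b := (myTake r i hile).append (Walk.cons hadj (r.drop j)) with hsdef
        have hsup : v ∉ s.support := by
          rw [hsdef, Walk.mem_support_append_iff]
          push_neg
          refine ⟨fun h => hrs (support_myTake_subset r i hile h), ?_⟩
          rw [Walk.support_cons]
          intro h
          rcases List.mem_cons.mp h with h | h
          · exact hrs (h ▸ getVert_mem_support' r i)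
          · exact hrs (support_drop_subset' r j h)
        have hslen : s.length = i + 1 + (r.length - j) := by
          simp [hsdef, Walk.length_append, Walk.length_cons, length_myTake, length_drop']
          omega
        have := hmin s hsup
        rw [hslen, hrlen] at this
        omega
      have hvadj : ∀ i : ℕ, i ≤ k + 2 → (G.Adj v (r.getVert i) ↔ (i = 0 ∨ i = k + 2)) := by
        intro i hi
        constructor
        · intro h
          by_contra hcon
          push_neg at hcon
          exact hint i (by omega) (by omega) h
        · rintro (rfl | rfl)
          · rwa [r.getVert_zero]
          · rw [show r.getVert (k+2) = b by
              rw [show k+2 = r.length by omega]; exact r.getVert_length]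
            exact hb
      have hpathadj : ∀ i j : ℕ, i < j → j ≤ k + 2 →
          (G.Adj (r.getVert i) (r.getVert j) ↔ j = i + 1) := by
        intro i j hij hj
        constructor
        · intro h
          by_contra hcon
          exact hchord i j (by omega) hj h
        · rintro rfl
          exact r.adj_getVert_succ (by omega)
      have hinj : Function.Injective
          (fun i : Fin (k+2+2) => if i.val = 0 then v else r.getVert (i.val - 1)) := by
        intro u w huw
        simp only at huw
        have hu := u.isLt
        have hw := w.isLt
        split_ifs at huw with h1 h2 h2
        · exact Fin.ext (by omega)
        · exact absurd (by rw [huw]; exact getVert_mem_support' r (w.val - 1)) hrs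
        · exact absurd (by rw [← huw]; exact getVert_mem_support' r (u.val - 1)) hrs
        · have := IsPath.getVert_injOn' hr (u.val - 1) (by omega) (w.val - 1) (by omega) huw
          exact Fin.ext (by omega)
      have main : ∀ u w : Fin (k+2+2), u.val < w.val →
          (G.Adj (if u.val = 0 then v else r.getVert (u.val - 1))
            (if w.val = 0 then v else r.getVert (w.val - 1)) ↔ (cycleGraph (k+2+2)).Adj u w) := by
        intro u w h
        have hu := u.isLt
        have hw := w.isLt
        rw [cyc_adj_char u w h]
        split_ifs with h1 h2 h2
        · omega
        · rw [hvadj (w.val - 1) (by omega)]; omega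
        · omega
        · rw [hpathadj (u.val - 1) (w.val - 1) (by omega) (by omega)]; omega
      refine (hchordal (k+2+2) (by omega)).false
        ⟨⟨fun i : Fin (k+2+2) => if i.val = 0 then v else r.getVert (i.val - 1), hinj⟩,
          @fun u w => ?_⟩
      simp only [Function.Embedding.coeFn_mk]
      rcases Nat.lt_trichotomy u.val w.val with h | h | h
      · exact main u w h
      · have huw : u = w := Fin.ext h
        subst huw
        exact ⟨fun hx => absurd hx (G.irrefl), fun hx => absurd hx ((cycleGraph _).irrefl)⟩
      · rw [G.adj_comm, (cycleGraph _).adj_comm]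
        exact main w u h

end Aux

theorem two_connected_chordal_locally_connected {V : Type*} [Fintype V] (G : SimpleGraph V)
    (hG : G.Connected) (hcard : 3 ≤ Fintype.card V)
    (hdel : ∀ v : V, (G.induce ({v}ᶜ : Set V)).Connected)
    (hchordal : ∀ n : ℕ, 4 ≤ n → IsEmpty (cycleGraph n ↪g G)) :
    G.LocallyConnected := by
  intro v
  have hne : ∃ w, G.Adj v w := by
    obtain ⟨w, hw⟩ := Fintype.exists_ne_of_one_lt_card (by omega) v
    obtain ⟨p⟩ := hG.preconnected v w
    have hnil : ¬ p.Nil := Walk.not_nil_of_ne (Ne.symm hw)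
    exact ⟨p.getVert 1, p.adj_snd hnil⟩
  obtain ⟨w0, hw0⟩ := hne
  rw [connected_iff]
  refine ⟨?_, ⟨⟨w0, hw0⟩⟩⟩
  rintro ⟨a, ha⟩ ⟨b, hb⟩
  have ha' : G.Adj v a := ha
  have hb' : G.Adj v b := hb
  have hav : a ∈ ({v}ᶜ : Set V) := by simp [ha'.ne']
  have hbv : b ∈ ({v}ᶜ : Set V) := by simp [hb'.ne']
  obtain ⟨q⟩ := (hdel v).preconnected ⟨a, hav⟩ ⟨b, hbv⟩
  refine key G v hchordal _ a b ha' hb'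
    (q.map (SimpleGraph.Embedding.induce ({v}ᶜ : Set V)).toHom) ?_ le_rfl
  intro h
  replace h : v ∈ (q.map (SimpleGraph.Embedding.induce ({v}ᶜ : Set V)).toHom).support := h
  rw [Walk.support_map] at h
  obtain ⟨x, hx, hxv⟩ := List.mem_map.mp h
  exact x.prop (by simp [← hxv])
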